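/- Let a, b > 0, A = √(a² + ab), B = √(b² + ab). Let α, β ∈ ℝ satisfy (a + b)·cos(α − β) = (a − b)·cos(α + β), and set P = (A cos α, B sin α), Q = (A cos β, B sin β) ∈ ℝ². Then ‖P − Q‖·‖P + Q‖ = (a + b)²·sin²(α − β). -/

import Mathlib

open Real

/-- For adjacent vertices `P`, `Q` of a Poncelet billiard quadrilateral between the
confocal ellipses with semiaxes `(A, B)` and `(a, b)`, `A² = a² + ab`, `B² = b² + ab`,
one has `‖P - Q‖ · ‖P + Q‖ = (a + b)² sin²(α - β)`. -/
theorem stmt_17 (a b : ℝ) (ha : 0 < a) (hb : 0 < b)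
    (A B : ℝ) (hA : A = Real.sqrt (a ^ 2 + a * b)) (hB : B = Real.sqrt (b ^ 2 + a * b))
    (α β : ℝ)
    (hrel : (a + b) * Real.cos (α - β) = (a - b) * Real.cos (α + β))
    (P Q : EuclideanSpace ℝ (Fin 2))
    (hP : P = ![A * Real.cos α, B * Real.sin α])
    (hQ : Q = ![A * Real.cos β, B * Real.sin β]) :
    ‖P - Q‖ * ‖P + Q‖ = (a + b) ^ 2 * Real.sin (α - β) ^ 2 := by
  have hA2 : A ^ 2 = a ^ 2 + a * b := by
    rw [hA]; exact Real.sq_sqrt (by positivity)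
  have hB2 : B ^ 2 = b ^ 2 + a * b := by
    rw [hB]; exact Real.sq_sqrt (by positivity)
  set ca := Real.cos α with hca
  set sa := Real.sin α with hsa
  set cb := Real.cos β with hcb
  set sb := Real.sin β with hsb
  have h1 : b * (ca * cb) + a * (sa * sb) = 0 := by
    rw [Real.cos_sub, Real.cos_add] at hrel
    linear_combination hrel / 2
  have hy : sa ^ 2 + ca ^ 2 = 1 := Real.sin_sq_add_cos_sq α
  have hw : sb ^ 2 + cb ^ 2 = 1 := Real.sin_sq_add_cos_sq β
  have hg : a ^ 2 * ((1 - ca ^ 2) * (1 - cb ^ 2)) = b ^ 2 * (ca ^ 2 * cb ^ 2) := by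
    linear_combination (a * (sa * sb) - b * (ca * cb)) * h1 - a ^ 2 * (1 - cb ^ 2) * hy
      - a ^ 2 * sa ^ 2 * hw
  have e1 : ‖P - Q‖ ^ 2 = (a ^ 2 + a * b) * (ca - cb) ^ 2 + (b ^ 2 + a * b) * (sa - sb) ^ 2 := by
    have e0 : ‖P - Q‖ ^ 2 = (A * ca - A * cb) ^ 2 + (B * sa - B * sb) ^ 2 := by
      rw [EuclideanSpace.norm_eq, Real.sq_sqrt (by positivity)]
      simp [Fin.sum_univ_two, Real.norm_eq_abs, sq_abs, hP, hQ]
    linear_combination e0 + (ca - cb) ^ 2 * hA2 + (sa - sb) ^ 2 * hB2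
  have e2 : ‖P + Q‖ ^ 2 = (a ^ 2 + a * b) * (ca + cb) ^ 2 + (b ^ 2 + a * b) * (sa + sb) ^ 2 := by
    have e0 : ‖P + Q‖ ^ 2 = (A * ca + A * cb) ^ 2 + (B * sa + B * sb) ^ 2 := by
      rw [EuclideanSpace.norm_eq, Real.sq_sqrt (by positivity)]
      simp [Fin.sum_univ_two, Real.norm_eq_abs, sq_abs, hP, hQ]
    linear_combination e0 + (ca + cb) ^ 2 * hA2 + (sa + sb) ^ 2 * hB2
  have hs : Real.sin (α - β) = sa * cb - ca * sb := Real.sin_sub α β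
  have key : a ^ 2 * (((a ^ 2 + a * b) * (ca - cb) ^ 2 + (b ^ 2 + a * b) * (sa - sb) ^ 2) *
      ((a ^ 2 + a * b) * (ca + cb) ^ 2 + (b ^ 2 + a * b) * (sa + sb) ^ 2)) =
      a ^ 2 * (((a + b) ^ 2 * (sa * cb - ca * sb) ^ 2) ^ 2) := by
    linear_combination
      (2*b^5*ca*cb + 6*b^5*ca^3*cb^3 - 2*a*b^4*sa*sb + 4*a*b^4*ca*cb + 4*a*b^4*ca*sa^2*cb^3 - 6*a*b^4*ca^2*sa*cb^2*sb + 4*a*b^4*ca^3*cb*sb^2 + 24*a*b^4*ca^3*cb^3 - 4*a^2*b^3*sa*sb - 6*a^2*b^3*ca*cb + 16*a^2*b^3*ca*sa^2*cb^3 - 24*a^2*b^3*ca^2*sa*cb^2*sb + 16*a^2*b^3*ca^3*cb*sb^2 + 36*a^2*b^3*ca^3*cb^3 - 2*a^3*b^2*sa*sb - 16*a^3*b^2*ca*cb + 24*a^3*b^2*ca*sa^2*cb^3 - 36*a^3*b^2*ca^2*sa*cb^2*sb + 24*a^3*b^2*ca^3*cb*sb^2 + 24*a^3*b^2*ca^3*cb^3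 - 8*a^4*b*ca*cb + 16*a^4*b*ca*sa^2*cb^3 - 24*a^4*b*ca^2*sa*cb^2*sb + 16*a^4*b*ca^3*cb*sb^2 + 6*a^4*b*ca^3*cb^3 + 4*a^5*ca*sa^2*cb^3 - 6*a^5*ca^2*sa*cb^2*sb + 4*a^5*ca^3*cb*sb^2) * h1 +
      (-4*a*b^5*ca^4*cb^2 + 1*a^2*b^4 + 1*a^2*b^4*sb^2 - 1*a^2*b^4*cb^2 - 1*a^2*b^4*ca^4 - 1*a^2*b^4*ca^4*sb^2 - 15*a^2*b^4*ca^4*cb^2 + 2*a^3*b^3 + 2*a^3*b^3*sb^2 + 2*a^3*b^3*ca^2 - 4*a^3*b^3*ca^4 - 4*a^3*b^3*ca^4*sb^2 - 20*a^3*b^3*ca^4*cb^2 + 1*a^4*b^2 + 1*a^4*b^2*sb^2 + 3*a^4*b^2*cb^2 + 4*a^4*b^2*ca^2 - 6*a^4*b^2*ca^4 - 6*a^4*b^2*ca^4*sb^2 - 10*a^4*b^2*ca^4*cb^2 + 2*a^5*b*cb^2 + 2*a^5*b*ca^2 - 4*a^5*b*ca^4 - 4*a^5*b*ca^4*sb^2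 - 1*a^6*ca^4 - 1*a^6*ca^4*sb^2 + 1*a^6*ca^4*cb^2) * hw +
      (-4*a*b^5*ca^2*cb^4 + 1*a^2*b^4 - 1*a^2*b^4*cb^4 + 1*a^2*b^4*sa^2 - 1*a^2*b^4*sa^2*cb^4 - 1*a^2*b^4*ca^2 - 15*a^2*b^4*ca^2*cb^4 + 2*a^3*b^3 + 2*a^3*b^3*cb^2 - 4*a^3*b^3*cb^4 + 2*a^3*b^3*sa^2 - 4*a^3*b^3*sa^2*cb^4 - 20*a^3*b^3*ca^2*cb^4 + 1*a^4*b^2 + 4*a^4*b^2*cb^2 - 6*a^4*b^2*cb^4 + 1*a^4*b^2*sa^2 - 6*a^4*b^2*sa^2*cb^4 + 3*a^4*b^2*ca^2 - 10*a^4*b^2*ca^2*cb^4 + 2*a^5*b*cb^2 - 4*a^5*b*cb^4 - 4*a^5*b*sa^2*cb^4 + 2*a^5*b*ca^2 - 1*a^6*cb^4 - 1*a^6*sa^2*cb^4 + 1*a^6*ca^2*cb^4) * hy +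
      (2*b^4 + 6*b^4*ca^2*cb^2 + 4*a*b^3 + 4*a*b^3*cb^2 + 4*a*b^3*ca^2 + 16*a*b^3*ca^2*cb^2 + 2*a^2*b^2 + 8*a^2*b^2*cb^2 + 8*a^2*b^2*ca^2 + 12*a^2*b^2*ca^2*cb^2 + 4*a^3*b*cb^2 + 4*a^3*b*ca^2 - 2*a^4*ca^2*cb^2) * hg
  have key2 : ((a ^ 2 + a * b) * (ca - cb) ^ 2 + (b ^ 2 + a * b) * (sa - sb) ^ 2) *
      ((a ^ 2 + a * b) * (ca + cb) ^ 2 + (b ^ 2 + a * b) * (sa + sb) ^ 2) =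
      ((a + b) ^ 2 * (sa * cb - ca * sb) ^ 2) ^ 2 :=
    mul_left_cancel₀ (by positivity : (a : ℝ) ^ 2 ≠ 0) key
  have hfin : (‖P - Q‖ * ‖P + Q‖) ^ 2 = ((a + b) ^ 2 * Real.sin (α - β) ^ 2) ^ 2 := by
    rw [mul_pow, e1, e2, hs]
    linear_combination key2
  have h0 : (0 : ℝ) ≤ ‖P - Q‖ * ‖P + Q‖ := by positivity
  have h0' : (0 : ℝ) ≤ (a + b) ^ 2 * Real.sin (α - β) ^ 2 := by positivity
  calc ‖P - Q‖ * ‖P + Q‖ = Real.sqrt ((‖P - Q‖ * ‖P + Q‖) ^ 2) := (Real.sqrt_sq h0).symm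
    _ = Real.sqrt (((a + b) ^ 2 * Real.sin (α - β) ^ 2) ^ 2) := by rw [hfin]
    _ = (a + b) ^ 2 * Real.sin (α - β) ^ 2 := Real.sqrt_sq h0'
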